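/- Let f : ℝⁿ → ℝ be twice continuously differentiable with L₂-Lipschitz Hessian, let x ∈ ℝⁿ, g = ∇f(x), H = ∇²f(x), and T(s) = f(x) + gᵀs + (1/2)sᵀHs. Let 0 < σ_min ≤ σ ≤ σ_max, r > 0, 0 < C_low ≤ C_up, η₁ ∈ (0,1). Suppose s ∈ ℝⁿ satisfies (H + σrI)s = −g, sᵀ(H + σrI)s > 0, C_low r ≤ ‖s‖ ≤ C_up r, and the acceptance condition f(x) − f(x+s) ≥ η₁(T(0) − T(s)). Then f(x) − f(x+s) ≥ (η₁/2) σ_min C_low² κ₀ ‖∇f(x+s)‖^{3/2}, where κ₀ = (2/(C_up(L₂C_up + 2σ_max)))^{3/2}. -/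

import Mathlib

open RealInnerProductSpace

/-- Quadratic Taylor bound for a map with Lipschitz derivative. -/
lemma quad_taylor_bound {F : Type*} [NormedAddCommGroup F] [NormedSpace ℝ F] [CompleteSpace F]
    (G : F → F) (hG : Differentiable ℝ G) (L : ℝ)
    (hLip : ∀ y z, ‖fderiv ℝ G y - fderiv ℝ G z‖ ≤ L * ‖y - z‖)
    (x s : F) : ‖G (x + s) - G x - fderiv ℝ G x s‖ ≤ L / 2 * ‖s‖ ^ 2 := by
  set φ : ℝ → F := fun t => G (x + t • s) - t • (fderiv ℝ G x s) with hφ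
  set ψ : ℝ → F := fun t => fderiv ℝ G (x + t • s) s - fderiv ℝ G x s with hψ
  have hline : ∀ t : ℝ, HasDerivAt (fun t : ℝ => x + t • s) s t := by
    intro t
    have := ((hasDerivAt_id t).smul_const s).const_add x
    simpa using this
  have hder : ∀ t : ℝ, HasDerivAt φ (ψ t) t := by
    intro t
    have h1 : HasDerivAt (fun t : ℝ => G (x + t • s)) (fderiv ℝ G (x + t • s) s) t :=
      (hG (x + t • s)).hasFDerivAt.comp_hasDerivAt t (hline t)
    have h2 : HasDerivAt (fun t : ℝ => t • (fderiv ℝ G x s)) (fderiv ℝ G x s) t := by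
      simpa using (hasDerivAt_id t).smul_const (fderiv ℝ G x s)
    exact h1.sub h2
  have hcontF : Continuous fun y => fderiv ℝ G y := by
    refine (LipschitzWith.of_dist_le_mul (K := L.toNNReal) ?_).continuous
    intro y z
    simp only [dist_eq_norm]
    calc ‖fderiv ℝ G y - fderiv ℝ G z‖ ≤ L * ‖y - z‖ := hLip y z
    _ ≤ L.toNNReal * ‖y - z‖ := by
        gcongr; exact Real.le_coe_toNNReal L
  have hcontψ : Continuous ψ := by
    apply Continuous.sub _ continuous_const
    exact (hcontF.comp (by continuity)).clm_apply continuous_const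
  have hint : ∫ t in (0:ℝ)..1, ψ t = φ 1 - φ 0 :=
    intervalIntegral.integral_eq_sub_of_hasDerivAt (fun t _ => hder t)
      (hcontψ.intervalIntegrable 0 1)
  have hφval : φ 1 - φ 0 = G (x + s) - G x - fderiv ℝ G x s := by
    simp [hφ]; abel
  have hbound : ‖∫ t in (0:ℝ)..1, ψ t‖ ≤ L / 2 * ‖s‖ ^ 2 := by
    have h1 : ∀ t ∈ Set.Icc (0:ℝ) 1, ‖ψ t‖ ≤ (L * ‖s‖ ^ 2) * t := by
      intro t ht
      have : ‖ψ t‖ ≤ ‖fderiv ℝ G (x + t • s) - fderiv ℝ G x‖ * ‖s‖ := by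
        simpa [hψ] using
          ((fderiv ℝ G (x + t • s) - fderiv ℝ G x).le_opNorm s)
      refine this.trans ?_
      have h2 : ‖fderiv ℝ G (x + t • s) - fderiv ℝ G x‖ ≤ L * (t * ‖s‖) := by
        have := hLip (x + t • s) x
        simpa [norm_smul, abs_of_nonneg ht.1] using this
      calc ‖fderiv ℝ G (x + t • s) - fderiv ℝ G x‖ * ‖s‖
          ≤ (L * (t * ‖s‖)) * ‖s‖ := by gcongr
        _ = (L * ‖s‖ ^ 2) * t := by ring
    calc ‖∫ t in (0:ℝ)..1, ψ t‖ ≤ ∫ t in (0:ℝ)..1, ‖ψ t‖ := by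
          apply intervalIntegral.norm_integral_le_integral_norm zero_le_one
      _ ≤ ∫ t in (0:ℝ)..1, (L * ‖s‖ ^ 2) * t := by
          apply intervalIntegral.integral_mono_on zero_le_one
            (hcontψ.norm.intervalIntegrable 0 1)
            ((continuous_const.mul continuous_id).intervalIntegrable 0 1)
          intro t ht; exact h1 t ht
      _ = L / 2 * ‖s‖ ^ 2 := by
          rw [intervalIntegral.integral_const_mul]
          simp [integral_id]; ring
  rw [hint, hφval] at hbound
  exact hbound

set_option maxHeartbeats 1000000 in
/-- Function decrease on a successful regularized Newton iteration:
if `(H + σrI)s = -g`, `sᵀ(H + σrI)s > 0`, `C_low r ≤ ‖s‖ ≤ C_up r`, and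
`f(x) - f(x+s) ≥ η₁(T(0) - T(s))`, then
`f(x) - f(x+s) ≥ (η₁/2)σ_min C_low² κ₀ ‖∇f(x+s)‖^{3/2}` with
`κ₀ = (2/(C_up(L₂C_up + 2σ_max)))^{3/2}`. -/
theorem decrease_successful_regularized_newton
    (n : ℕ) (f : EuclideanSpace ℝ (Fin n) → ℝ) (L₂ : ℝ) (hL₂ : 0 < L₂)
    (hf : ContDiff ℝ 2 f)
    (hLip : ∀ y z : EuclideanSpace ℝ (Fin n),
      ‖fderiv ℝ (gradient f) y - fderiv ℝ (gradient f) z‖ ≤ L₂ * ‖y - z‖)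
    (x : EuclideanSpace ℝ (Fin n))
    (T : EuclideanSpace ℝ (Fin n) → ℝ)
    (hT : ∀ s : EuclideanSpace ℝ (Fin n),
      T s = f x + ⟪gradient f x, s⟫ + (1 / 2) * ⟪s, fderiv ℝ (gradient f) x s⟫)
    (σ σ_min σ_max r C_low C_up η₁ : ℝ)
    (hσmin : 0 < σ_min) (hσlo : σ_min ≤ σ) (hσhi : σ ≤ σ_max)
    (hr : 0 < r) (hClow : 0 < C_low) (hCle : C_low ≤ C_up)
    (hη₁ : η₁ ∈ Set.Ioo (0 : ℝ) 1)
    (s : EuclideanSpace ℝ (Fin n))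
    (hs : fderiv ℝ (gradient f) x s + (σ * r) • s = -gradient f x)
    (hcurv : 0 < ⟪s, fderiv ℝ (gradient f) x s + (σ * r) • s⟫)
    (hlow : C_low * r ≤ ‖s‖) (hup : ‖s‖ ≤ C_up * r)
    (hacc : f x - f (x + s) ≥ η₁ * (T 0 - T s)) :
    f x - f (x + s) ≥ (η₁ / 2) * σ_min * C_low ^ 2 *
      (2 / (C_up * (L₂ * C_up + 2 * σ_max))) ^ ((3 : ℝ) / 2) *
      ‖gradient f (x + s)‖ ^ ((3 : ℝ) / 2) := by
  obtain ⟨hη₁pos, hη₁lt⟩ := hη₁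
  set G := gradient f with hG
  set H := fderiv ℝ G x with hH
  have hCup : 0 < C_up := lt_of_lt_of_le hClow hCle
  have hσpos : 0 < σ := lt_of_lt_of_le hσmin hσlo
  have hσmaxpos : 0 < σ_max := lt_of_lt_of_le hσpos hσhi
  -- expand hcurv
  have hcurv' : 0 < ⟪s, H s⟫ + σ * r * ‖s‖ ^ 2 := by
    have h : ⟪s, H s + (σ * r) • s⟫ = ⟪s, H s⟫ + σ * r * ‖s‖ ^ 2 := by
      rw [inner_add_right, real_inner_smul_right, real_inner_self_eq_norm_sq]
    rw [h] at hcurv; exact hcurv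
  -- inner product relation from hs
  have hinner : ⟪G x, s⟫ = -(⟪s, H s⟫ + σ * r * ‖s‖ ^ 2) := by
    have h1 : ⟪s, H s + (σ * r) • s⟫ = ⟪s, -G x⟫ := by rw [hs]
    rw [inner_add_right, real_inner_smul_right, real_inner_self_eq_norm_sq,
      inner_neg_right] at h1
    have hc : (⟪G x, s⟫ : ℝ) = ⟪s, G x⟫ := real_inner_comm _ _
    linarith [h1, hc]
  -- model decrease
  have hmodel : T 0 - T s ≥ σ * r / 2 * ‖s‖ ^ 2 := by
    have h0 : T 0 = f x := by simp [hT]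
    have h1 := hT s
    rw [h0, h1, hinner]; linarith [hcurv']
  -- step 1 : decrease ≥ (η₁/2) σ_min C_low² r³
  have hstep : f x - f (x + s) ≥ η₁ / 2 * σ_min * C_low ^ 2 * r ^ 3 := by
    have hns : C_low * r ≤ ‖s‖ := hlow
    have h2 : η₁ * (T 0 - T s) ≥ η₁ * (σ * r / 2 * ‖s‖ ^ 2) := by
      apply mul_le_mul_of_nonneg_left hmodel hη₁pos.le
    have h3 : σ * r / 2 * ‖s‖ ^ 2 ≥ σ_min * r / 2 * (C_low * r) ^ 2 := by
      have h4 : (C_low * r) ^ 2 ≤ ‖s‖ ^ 2 := by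
        apply pow_le_pow_left₀ (by positivity) hns
      calc σ_min * r / 2 * (C_low * r) ^ 2 ≤ σ_min * r / 2 * ‖s‖ ^ 2 :=
            mul_le_mul_of_nonneg_left h4 (by positivity)
        _ ≤ σ * r / 2 * ‖s‖ ^ 2 := by
            apply mul_le_mul_of_nonneg_right _ (sq_nonneg _)
            nlinarith
    have h5 : η₁ * (σ_min * r / 2 * (C_low * r) ^ 2) = η₁ / 2 * σ_min * C_low ^ 2 * r ^ 3 := by
      ring
    nlinarith [hacc, h2, h3, hη₁pos]
  -- gradient bound
  have hGdiff : Differentiable ℝ G := by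
    rw [hG]
    have h1 : ContDiff ℝ 1 (fderiv ℝ f) := hf.fderiv_right (by norm_num)
    have h2 : ContDiff ℝ 1 fun y =>
        (InnerProductSpace.toDual ℝ (EuclideanSpace ℝ (Fin n))).symm (fderiv ℝ f y) :=
      (InnerProductSpace.toDual ℝ (EuclideanSpace ℝ (Fin n))).symm.contDiff.comp h1
    exact h2.differentiable (by norm_num)
  have htaylor : ‖G (x + s) - G x - H s‖ ≤ L₂ / 2 * ‖s‖ ^ 2 :=
    quad_taylor_bound G hGdiff L₂ hLip x s
  have hgplus : ‖G (x + s)‖ ≤ C_up * (L₂ * C_up + 2 * σ_max) / 2 * r ^ 2 := by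
    have hGxeq : G x = -(H s + (σ * r) • s) := neg_eq_iff_eq_neg.mp hs.symm
    have hsum : G x + H s = -((σ * r) • s) := by rw [hGxeq]; abel
    have hsplit : G (x + s) = (G (x + s) - G x - H s) + (G x + H s) := by abel
    calc ‖G (x + s)‖ = ‖(G (x + s) - G x - H s) + (G x + H s)‖ := by rw [← hsplit]
      _ ≤ ‖G (x + s) - G x - H s‖ + ‖G x + H s‖ := norm_add_le _ _
      _ ≤ L₂ / 2 * ‖s‖ ^ 2 + σ * r * ‖s‖ := by
          have heq : ‖G x + H s‖ = σ * r * ‖s‖ := by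
            rw [hsum, norm_neg, norm_smul, Real.norm_eq_abs,
              abs_of_nonneg (by positivity : (0:ℝ) ≤ σ * r)]
          rw [heq]; gcongr
      _ ≤ C_up * (L₂ * C_up + 2 * σ_max) / 2 * r ^ 2 := by
          have h1 : ‖s‖ ^ 2 ≤ (C_up * r) ^ 2 := by
            apply pow_le_pow_left₀ (norm_nonneg s) hup
          nlinarith [norm_nonneg s, hr.le, hL₂.le,
            mul_le_mul_of_nonneg_left h1 (by positivity : (0:ℝ) ≤ L₂ / 2),
            mul_le_mul hσhi hup (norm_nonneg s) hσmaxpos.le, hr]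
  -- step 2 : r³ ≥ κ₀ ‖g₊‖^{3/2}
  set D : ℝ := C_up * (L₂ * C_up + 2 * σ_max) with hD
  have hDpos : 0 < D := by positivity
  have hstep2 : (2 / D) ^ ((3:ℝ)/2) * ‖G (x + s)‖ ^ ((3:ℝ)/2) ≤ r ^ 3 := by
    have h1 : (2 / D) * ‖G (x + s)‖ ≤ r ^ 2 := by
      rw [div_mul_eq_mul_div, div_le_iff₀ hDpos]
      nlinarith [hgplus]
    have h2 : ((2 / D) * ‖G (x + s)‖) ^ ((3:ℝ)/2) ≤ (r ^ 2) ^ ((3:ℝ)/2) :=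
      Real.rpow_le_rpow (by positivity) h1 (by norm_num)
    rw [Real.mul_rpow (by positivity) (norm_nonneg _)] at h2
    have h3 : (r ^ 2 : ℝ) ^ ((3:ℝ)/2) = r ^ 3 := by
      rw [← Real.rpow_natCast r 2, ← Real.rpow_mul hr.le, ← Real.rpow_natCast r 3]
      norm_num
    rw [h3] at h2
    exact h2
  calc f x - f (x + s) ≥ η₁ / 2 * σ_min * C_low ^ 2 * r ^ 3 := hstep
    _ ≥ η₁ / 2 * σ_min * C_low ^ 2 *
        ((2 / D) ^ ((3:ℝ)/2) * ‖G (x + s)‖ ^ ((3:ℝ)/2)) := by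
        apply mul_le_mul_of_nonneg_left hstep2 (by positivity)
    _ = (η₁ / 2) * σ_min * C_low ^ 2 *
        (2 / (C_up * (L₂ * C_up + 2 * σ_max))) ^ ((3 : ℝ) / 2) *
        ‖G (x + s)‖ ^ ((3 : ℝ) / 2) := by rw [hD]; ring
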